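/- If S is a Noetherian ordered set, then the set S^(≥) of infinite decreasing sequences s_0 ≥ s_1 ≥ ... of elements of S, ordered componentwise, is Noetherian. -/

import Mathlib

/-- An antitone sequence in a Noetherian order is eventually constant. -/
lemma aux_ev_const {S : Type*} [PartialOrder S]
    (hS : ∀ f : ℕ → S, ∃ i j : ℕ, i < j ∧ f i ≤ f j)
    (s : ℕ → S) (hs : Antitone s) : ∃ N, ∀ n, N ≤ n → s n = s N := by
  by_contra h
  push_neg at h
  choose f hf1 hf2 using h
  have hlt : ∀ N, s (f N) < s N := fun N => lt_of_le_of_ne (hs (hf1 N)) (hf2 N)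
  set φ : ℕ → ℕ := fun n => f^[n] 0 with hφ
  have hstep : ∀ n, φ (n + 1) = f (φ n) := fun n => Function.iterate_succ_apply' f n 0
  have hanti : StrictAnti (fun n => s (φ n)) := by
    apply strictAnti_nat_of_succ_lt
    intro n
    rw [hstep]
    exact hlt (φ n)
  obtain ⟨i, j, hij, hle⟩ := hS (fun n => s (φ n))
  exact absurd hle (fun h => lt_irrefl _ (lt_of_le_of_lt h (hanti hij)))

/-- Key Higman-to-pointwise lemma: a sublist-embedding into a decreasing word gives
pointwise domination. -/
lemma aux_point {S : Type*} [PartialOrder S] (t : ℕ → S) (ht : Antitone t) :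
    ∀ (M : ℕ) (k : ℕ) (l₁ : List S),
      List.SublistForall₂ (· ≤ ·) l₁ ((List.range' k M).map t) →
      ∀ (d : S) (n : ℕ), n < l₁.length → l₁.getD n d ≤ t (k + n) := by
  intro M
  induction M with
  | zero =>
    intro k l₁ h d n hn
    simp only [List.range'_zero, List.map_nil] at h
    cases h
    simp at hn
  | succ M ih =>
    intro k l₁ h d n hn
    rw [List.range'_succ, List.map_cons] at h
    cases h with
    | nil => simp at hn
    | cons hab htail =>
      rename_i a₁ l₁'
      cases n with
      | zero =>
        simp only [List.getD_cons_zero, Nat.add_zero]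
        exact hab
      | succ n =>
        have := ih (k + 1) l₁' htail d n (by simpa using hn)
        simp only [List.getD_cons_succ]
        calc l₁'.getD n d ≤ t (k + 1 + n) := this
          _ ≤ t (k + (n + 1)) := le_of_eq (by ring_nf)
    | cons_right htail =>
      have := ih (k + 1) l₁ htail d n hn
      calc l₁.getD n d ≤ t (k + 1 + n) := this
        _ ≤ t (k + n) := ht (by omega)

theorem stmt_6 {S : Type*} [PartialOrder S]
    (hS : ∀ f : ℕ → S, ∃ i j : ℕ, i < j ∧ f i ≤ f j) :
    ∀ F : ℕ → {s : ℕ → S // Antitone s},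
      ∃ i j : ℕ, i < j ∧ ∀ n : ℕ, (F i).1 n ≤ (F j).1 n := by
  intro F
  -- the full order on S is a partial well-order
  have pwo : (Set.univ : Set S).PartiallyWellOrderedOn (· ≤ ·) := fun f => hS (fun n => (f n).1)
  -- each F k is eventually constant
  have hev : ∀ k, ∃ N, ∀ n, N ≤ n → (F k).1 n = (F k).1 N :=
    fun k => aux_ev_const hS (F k).1 (F k).2
  choose N hN using hev
  set L : ℕ → S := fun k => (F k).1 (N k) with hL
  have hL_le : ∀ k n, L k ≤ (F k).1 n := by
    intro k n
    rcases le_total n (N k) with h | h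
    · exact (F k).2 h
    · exact le_of_eq (hN k n h).symm
  have hL_eq : ∀ k n, N k ≤ n → (F k).1 n = L k := fun k n h => hN k n h
  -- monotone subsequence of the limits
  obtain ⟨g, hg⟩ := pwo.exists_monotone_subseq (f := L) (fun _ => Set.mem_univ _)
  -- Higman's lemma on the essential prefixes, along the subsequence g
  have higman := pwo.partiallyWellOrderedOn_sublistForall₂ (· ≤ ·)
  obtain ⟨m, n, hmn, hsub⟩ := higman
    (fun k => ⟨(List.range (N (g k))).map (F (g k)).1,
    (by intro x _; exact Set.mem_univ x)⟩)
  refine ⟨g m, g n, g.strictMono hmn, ?_⟩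
  intro p
  rcases lt_or_ge p (N (g m)) with hp | hp
  · -- use the Higman embedding plus antitonicity of F (g n)
    simp only [List.range_eq_range'] at hsub
    have := aux_point (F (g n)).1 (F (g n)).2 (N (g n)) 0
      ((List.range' 0 (N (g m))).map (F (g m)).1) hsub
      ((F (g m)).1 0) p (by simpa using hp)
    simp only [List.getD_eq_getElem?_getD, List.getElem?_map,
      List.getElem?_range' (s := 0) (step := 1) (show p < N (g m) from hp),
      Option.map_some, Option.getD_some] at this
    simpa using this
  · calc (F (g m)).1 p = L (g m) := hL_eq _ _ hp
      _ ≤ L (g n) := hg m n hmn.le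
      _ ≤ (F (g n)).1 p := hL_le _ _
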